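/- The deconcatenation coproduct Δ : T(V) → T(V) ⊗ T(V), defined on homogeneous tensors by Δ(v_1⊗…⊗v_n) = Σ_{i=0}^{n} (v_1⊗…⊗v_i) ⊗ (v_{i+1}⊗…⊗v_n) (with empty factors equal to 1 ∈ R = V^{⊗0}), is a homomorphism of R-algebras from (T(V), μ_sh) to (T(V), μ_sh) ⊗ (T(V), μ_sh) with its componentwise product; that is, Δ(x *_sh y) = Δ(x) · Δ(y), so the shuffle product and the deconcatenation coproduct make T(V) a bialgebra. -/

import Mathlib

open scoped DirectSum TensorProduct

/-- The tensor module `T(V) = ⨁_{n∈ℕ} V^{⊗n}`. -/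
abbrev TensorModule (R V : Type) [CommRing R] [AddCommGroup V] [Module R V] :=
  ⨁ n : ℕ, PiTensorProduct R (fun _ : Fin n => V)

/-- The canonical inclusion `V^{⊗n} → T(V)`. -/
noncomputable def tmOf (R V : Type) [CommRing R] [AddCommGroup V] [Module R V] (n : ℕ) :
    PiTensorProduct R (fun _ : Fin n => V) →ₗ[R] TensorModule R V :=
  DirectSum.lof R ℕ (fun n => PiTensorProduct R (fun _ : Fin n => V)) n

/-- A permutation `σ` of `Fin (p+q)` is a `(p,q)`-shuffle if it is strictly increasing on
the first `p` positions and on the last `q` positions. -/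
def IsShuffle (p q : ℕ) (σ : Equiv.Perm (Fin (p + q))) : Prop :=
  (∀ i j : Fin p, i < j → σ (Fin.castAdd q i) < σ (Fin.castAdd q j)) ∧
  (∀ i j : Fin q, i < j → σ (Fin.natAdd p i) < σ (Fin.natAdd p j))

instance (p q : ℕ) : DecidablePred (IsShuffle p q) := fun σ => by
  unfold IsShuffle; infer_instance

set_option linter.unusedSectionVars false
set_option maxHeartbeats 1000000

namespace ShuffleAux

variable {V : Type} [AddCommGroup V]

/-- extension by zero of a tuple to `ℕ`. -/
def ext0 {p : ℕ} (v : Fin p → V) : ℕ → V := fun k => if h : k < p then v ⟨k, h⟩ else 0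

lemma ext0_lt {p : ℕ} (v : Fin p → V) {k : ℕ} (h : k < p) : ext0 v k = v ⟨k, h⟩ := dif_pos h

/-- rank of `k` within `S`. -/
def rk {n : ℕ} (S : Finset (Fin n)) (k : Fin n) : ℕ := (S.filter (· < k)).card

/-- the word obtained by interleaving letters of `uv` (at positions in `S`) with
letters of `uw` (at positions outside `S`). -/
def word {n : ℕ} (uv uw : ℕ → V) (S : Finset (Fin n)) : Fin n → V :=
  fun k => if k ∈ S then uv (rk S k) else uw (rk Sᶜ k)

lemma rk_lt_card {n : ℕ} {S : Finset (Fin n)} {k : Fin n} (hk : k ∈ S) : rk S k < S.card := by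
  refine Finset.card_lt_card ?_
  refine (Finset.ssubset_iff_of_subset (Finset.filter_subset _ _)).mpr ⟨k, hk, by simp⟩

lemma word_congr {n : ℕ} {uv uw uv' uw' : ℕ → V} (S : Finset (Fin n))
    (h1 : ∀ k < S.card, uv k = uv' k) (h2 : ∀ k < Sᶜ.card, uw k = uw' k) :
    word uv uw S = word uv' uw' S := by
  funext k
  unfold word
  by_cases hk : k ∈ S
  · simp only [hk, if_true]; exact h1 _ (rk_lt_card hk)
  · simp only [hk, if_false]; exact h2 _ (rk_lt_card (by simpa using hk))

lemma rk_image {n p : ℕ} {g : Fin p → Fin n} (hg : StrictMono g) (i : Fin p) :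
    rk (Finset.image g Finset.univ) (g i) = i := by
  unfold rk
  have : (Finset.image g Finset.univ).filter (· < g i)
      = Finset.image g (Finset.univ.filter (· < i)) := by
    ext k
    simp only [Finset.mem_filter, Finset.mem_image, Finset.mem_univ, true_and]
    constructor
    · rintro ⟨⟨a, rfl⟩, h⟩; exact ⟨a, hg.lt_iff_lt.mp h, rfl⟩
    · rintro ⟨a, ha, rfl⟩; exact ⟨⟨a, rfl⟩, hg ha⟩
  rw [this, Finset.card_image_of_injective _ hg.injective]
  have : Finset.univ.filter (· < i) = Finset.Iio i := by ext a; simp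
  rw [this]
  simp

section join

variable {mA mB : ℕ} {A : Finset (Fin mA)} {B : Finset (Fin mB)}

/-- concatenation of position sets. -/
def join {mA mB : ℕ} (A : Finset (Fin mA)) (B : Finset (Fin mB)) : Finset (Fin (mA + mB)) :=
  A.map (Fin.castAddOrderEmb mB).toEmbedding ∪ B.map (Fin.natAddOrderEmb mA).toEmbedding

lemma castAdd_mem_join {a : Fin mA} : Fin.castAdd mB a ∈ join A B ↔ a ∈ A := by
  simp only [join, Finset.mem_union, Finset.mem_map, RelEmbedding.coe_toEmbedding,
    Fin.castAddOrderEmb_apply, Fin.natAddOrderEmb_apply]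
  constructor
  · rintro (⟨x, hx, h⟩ | ⟨x, hx, h⟩)
    · rwa [(Fin.castAdd_injective _ _ h : x = a)] at hx
    · exfalso; have := congrArg Fin.val h
      simp only [Fin.coe_natAdd, Fin.coe_castAdd] at this
      omega
  · intro ha; exact Or.inl ⟨a, ha, rfl⟩

lemma natAdd_mem_join {b : Fin mB} : Fin.natAdd mA b ∈ join A B ↔ b ∈ B := by
  simp only [join, Finset.mem_union, Finset.mem_map, RelEmbedding.coe_toEmbedding,
    Fin.castAddOrderEmb_apply, Fin.natAddOrderEmb_apply]
  constructor
  · rintro (⟨x, hx, h⟩ | ⟨x, hx, h⟩)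
    · exfalso; have := congrArg Fin.val h
      simp only [Fin.coe_natAdd, Fin.coe_castAdd] at this
      omega
    · have : x = b := by
        have := congrArg Fin.val h
        simp only [Fin.coe_natAdd] at this
        exact Fin.ext (by omega)
      rwa [this] at hx
  · intro hb; exact Or.inr ⟨b, hb, rfl⟩

lemma disjoint_maps :
    Disjoint (A.map (Fin.castAddOrderEmb mB).toEmbedding)
      (B.map (Fin.natAddOrderEmb mA).toEmbedding) := by
  rw [Finset.disjoint_left]
  rintro k hk hk'
  simp only [Finset.mem_map, RelEmbedding.coe_toEmbedding, Fin.castAddOrderEmb_apply,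
    Fin.natAddOrderEmb_apply] at hk hk'
  obtain ⟨x, -, rfl⟩ := hk
  obtain ⟨y, -, h⟩ := hk'
  have := congrArg Fin.val h
  simp only [Fin.coe_natAdd, Fin.coe_castAdd] at this
  omega

lemma card_join : (join A B).card = A.card + B.card := by
  rw [join, Finset.card_union_of_disjoint disjoint_maps, Finset.card_map, Finset.card_map]

lemma compl_join : (join A B)ᶜ = join Aᶜ Bᶜ := by
  ext k
  induction k using Fin.addCases with
  | left a => rw [Finset.mem_compl, castAdd_mem_join, castAdd_mem_join, Finset.mem_compl]
  | right b => rw [Finset.mem_compl, natAdd_mem_join, natAdd_mem_join, Finset.mem_compl]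

lemma filter_join_lt_castAdd (a : Fin mA) :
    (join A B).filter (· < Fin.castAdd mB a)
      = (A.filter (· < a)).map (Fin.castAddOrderEmb mB).toEmbedding := by
  ext k
  simp only [join, Finset.mem_filter, Finset.mem_union, Finset.mem_map,
    RelEmbedding.coe_toEmbedding, Fin.castAddOrderEmb_apply, Fin.natAddOrderEmb_apply]
  constructor
  · rintro ⟨⟨x, hx, rfl⟩ | ⟨x, hx, rfl⟩, hlt⟩
    · refine ⟨x, ⟨hx, ?_⟩, rfl⟩
      rw [Fin.lt_def] at hlt ⊢
      simpa only [Fin.coe_castAdd] using hlt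
    · exfalso; rw [Fin.lt_def] at hlt
      simp only [Fin.coe_natAdd, Fin.coe_castAdd] at hlt
      omega
  · rintro ⟨x, ⟨hx, hlt⟩, rfl⟩
    refine ⟨Or.inl ⟨x, hx, rfl⟩, ?_⟩
    rw [Fin.lt_def] at hlt ⊢
    simpa only [Fin.coe_castAdd] using hlt

lemma filter_join_lt_natAdd (b : Fin mB) :
    (join A B).filter (· < Fin.natAdd mA b)
      = A.map (Fin.castAddOrderEmb mB).toEmbedding
        ∪ (B.filter (· < b)).map (Fin.natAddOrderEmb mA).toEmbedding := by
  ext k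
  simp only [join, Finset.mem_filter, Finset.mem_union, Finset.mem_map,
    RelEmbedding.coe_toEmbedding, Fin.castAddOrderEmb_apply, Fin.natAddOrderEmb_apply]
  constructor
  · rintro ⟨⟨x, hx, rfl⟩ | ⟨x, hx, rfl⟩, hlt⟩
    · exact Or.inl ⟨x, hx, rfl⟩
    · refine Or.inr ⟨x, ⟨hx, ?_⟩, rfl⟩
      rw [Fin.lt_def] at hlt ⊢
      simp only [Fin.coe_natAdd] at hlt
      omega
  · rintro (⟨x, hx, rfl⟩ | ⟨x, ⟨hx, hlt⟩, rfl⟩)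
    · refine ⟨Or.inl ⟨x, hx, rfl⟩, ?_⟩
      rw [Fin.lt_def]
      simp only [Fin.coe_natAdd, Fin.coe_castAdd]
      omega
    · refine ⟨Or.inr ⟨x, hx, rfl⟩, ?_⟩
      rw [Fin.lt_def] at hlt ⊢
      simp only [Fin.coe_natAdd]
      omega

lemma rk_join_castAdd (a : Fin mA) : rk (join A B) (Fin.castAdd mB a) = rk A a := by
  unfold rk
  rw [filter_join_lt_castAdd, Finset.card_map]

lemma rk_join_natAdd (b : Fin mB) : rk (join A B) (Fin.natAdd mA b) = A.card + rk B b := by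
  unfold rk
  rw [filter_join_lt_natAdd,
    Finset.card_union_of_disjoint
      (disjoint_maps.mono_right (Finset.map_subset_map.mpr (Finset.filter_subset _ _))),
    Finset.card_map, Finset.card_map]

lemma word_join_castAdd (uv uw : ℕ → V) (a : Fin mA) :
    word uv uw (join A B) (Fin.castAdd mB a) = word uv uw A a := by
  unfold word
  by_cases ha : a ∈ A
  · rw [if_pos (castAdd_mem_join.mpr ha), if_pos ha, rk_join_castAdd]
  · rw [if_neg (fun h => ha (castAdd_mem_join.mp h)), if_neg ha, compl_join, rk_join_castAdd]

lemma word_join_natAdd (uv uw : ℕ → V) (b : Fin mB) :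
    word uv uw (join A B) (Fin.natAdd mA b)
      = word (fun k => uv (A.card + k)) (fun k => uw (Aᶜ.card + k)) B b := by
  unfold word
  by_cases hb : b ∈ B
  · rw [if_pos (natAdd_mem_join.mpr hb), if_pos hb, rk_join_natAdd]
  · rw [if_neg (fun h => hb (natAdd_mem_join.mp h)), if_neg hb, compl_join, rk_join_natAdd]

end join

section congrMap

variable {n1 n2 : ℕ} (h : n1 = n2) (S : Finset (Fin n1))

lemma mem_map_finCongr {k : Fin n1} : finCongr h k ∈ S.map (finCongr h).toEmbedding ↔ k ∈ S :=
  Finset.mem_map' _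

lemma compl_map_finCongr : (S.map (finCongr h).toEmbedding)ᶜ = Sᶜ.map (finCongr h).toEmbedding := by
  ext k
  obtain ⟨k', rfl⟩ := (finCongr h).surjective k
  rw [Finset.mem_compl, mem_map_finCongr, mem_map_finCongr, Finset.mem_compl]

lemma rk_map_finCongr (k : Fin n1) :
    rk (S.map (finCongr h).toEmbedding) (finCongr h k) = rk S k := by
  unfold rk
  rw [Finset.filter_map, Finset.card_map]
  congr 1

lemma word_map_finCongr (uv uw : ℕ → V) (k : Fin n1) :
    word uv uw (S.map (finCongr h).toEmbedding) (finCongr h k) = word uv uw S k := by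
  unfold word
  by_cases hk : k ∈ S
  · rw [if_pos ((mem_map_finCongr h S).mpr hk), if_pos hk, rk_map_finCongr]
  · rw [if_neg (fun hh => hk ((mem_map_finCongr h S).mp hh)), if_neg hk, compl_map_finCongr,
      rk_map_finCongr]

end congrMap

section shuffles

lemma image_orderEmbOfFin {n k : ℕ} (s : Finset (Fin n)) (h : s.card = k) :
    Finset.image (s.orderEmbOfFin h) Finset.univ = s := by
  ext x
  simp only [Finset.mem_image, Finset.mem_univ, true_and]
  constructor
  · rintro ⟨i, rfl⟩; exact Finset.orderEmbOfFin_mem s h i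
  · intro hx
    have : x ∈ Set.range (s.orderEmbOfFin h) := by
      rw [Finset.range_orderEmbOfFin]; exact hx
    obtain ⟨i, hi⟩ := this; exact ⟨i, hi⟩

/-- the shuffle permutation associated to a position set. -/
noncomputable def shufOf {p q : ℕ} (S : Finset (Fin (p + q))) (hS : S.card = p)
    (hSc : Sᶜ.card = q) : Equiv.Perm (Fin (p + q)) :=
  Equiv.ofBijective
    (fun k => Sum.elim (S.orderEmbOfFin hS) (Sᶜ.orderEmbOfFin hSc) (finSumFinEquiv.symm k))
    (by
      have hinj : Function.Injective
          (Sum.elim (⇑(S.orderEmbOfFin hS)) (⇑(Sᶜ.orderEmbOfFin hSc))) := by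
        rintro (a | a) (b | b) hab <;> simp only [Sum.elim_inl, Sum.elim_inr] at hab
        · exact congrArg Sum.inl ((S.orderEmbOfFin hS).injective hab)
        · exact absurd (hab ▸ Finset.orderEmbOfFin_mem S hS a)
            (Finset.mem_compl.mp (Finset.orderEmbOfFin_mem Sᶜ hSc b))
        · exact absurd (Finset.orderEmbOfFin_mem S hS b)
            (Finset.mem_compl.mp (hab ▸ Finset.orderEmbOfFin_mem Sᶜ hSc a))
        · exact congrArg Sum.inr ((Sᶜ.orderEmbOfFin hSc).injective hab)
      exact Finite.injective_iff_bijective.mp (hinj.comp finSumFinEquiv.symm.injective))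

lemma shufOf_castAdd {p q : ℕ} (S : Finset (Fin (p + q))) (hS : S.card = p)
    (hSc : Sᶜ.card = q) (i : Fin p) :
    shufOf S hS hSc (Fin.castAdd q i) = S.orderEmbOfFin hS i := by
  simp [shufOf, finSumFinEquiv_symm_apply_castAdd]

lemma shufOf_natAdd {p q : ℕ} (S : Finset (Fin (p + q))) (hS : S.card = p)
    (hSc : Sᶜ.card = q) (j : Fin q) :
    shufOf S hS hSc (Fin.natAdd p j) = Sᶜ.orderEmbOfFin hSc j := by
  simp [shufOf, finSumFinEquiv_symm_apply_natAdd]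

lemma isShuffle_shufOf {p q : ℕ} (S : Finset (Fin (p + q))) (hS : S.card = p)
    (hSc : Sᶜ.card = q) : IsShuffle p q (shufOf S hS hSc) := by
  constructor
  · intro i j hij
    rw [shufOf_castAdd, shufOf_castAdd]
    exact (S.orderEmbOfFin hS).strictMono hij
  · intro i j hij
    rw [shufOf_natAdd, shufOf_natAdd]
    exact (Sᶜ.orderEmbOfFin hSc).strictMono hij

lemma image_natAdd_eq_compl {p q : ℕ} {σ : Equiv.Perm (Fin (p + q))} :
    Finset.image (fun j : Fin q => σ (Fin.natAdd p j)) Finset.univ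
      = (Finset.image (fun i : Fin p => σ (Fin.castAdd q i)) Finset.univ)ᶜ := by
  ext k
  obtain ⟨s, rfl⟩ := σ.surjective k
  simp only [Finset.mem_compl, Finset.mem_image, Finset.mem_univ, true_and,
    σ.injective.eq_iff]
  induction s using Fin.addCases with
  | left a =>
    constructor
    · rintro ⟨j, hj⟩
      exfalso
      have := congrArg Fin.val hj
      simp only [Fin.coe_natAdd, Fin.coe_castAdd] at this
      omega
    · intro hne; exact absurd ⟨a, rfl⟩ hne
  | right b =>
    constructor
    · rintro - ⟨i, hi⟩
      have := congrArg Fin.val hi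
      simp only [Fin.coe_natAdd, Fin.coe_castAdd] at this
      omega
    · intro _; exact ⟨b, rfl⟩

lemma append_eq_word {p q : ℕ} {σ : Equiv.Perm (Fin (p + q))} (hσ : IsShuffle p q σ)
    (v : Fin p → V) (w : Fin q → V) (k : Fin (p + q)) :
    Fin.append v w (σ⁻¹ k)
      = word (ext0 v) (ext0 w)
          (Finset.image (fun i : Fin p => σ (Fin.castAdd q i)) Finset.univ) k := by
  have hgmono : StrictMono (fun i : Fin p => σ (Fin.castAdd q i)) :=
    fun i j hij => hσ.1 i j hij
  have hhmono : StrictMono (fun j : Fin q => σ (Fin.natAdd p j)) :=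
    fun i j hij => hσ.2 i j hij
  obtain ⟨s, rfl⟩ := σ.surjective k
  rw [Equiv.Perm.inv_def, Equiv.symm_apply_apply]
  induction s using Fin.addCases with
  | left a =>
    have hmem : σ (Fin.castAdd q a)
        ∈ Finset.image (fun i : Fin p => σ (Fin.castAdd q i)) Finset.univ :=
      Finset.mem_image_of_mem _ (Finset.mem_univ a)
    rw [Fin.append_left]
    unfold word
    rw [if_pos hmem]
    have hrk := rk_image hgmono a
    rw [hrk, ext0_lt v a.isLt]
  | right b =>
    have hmem : σ (Fin.natAdd p b)
        ∈ (Finset.image (fun i : Fin p => σ (Fin.castAdd q i)) Finset.univ)ᶜ := by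
      rw [← image_natAdd_eq_compl]
      exact Finset.mem_image_of_mem _ (Finset.mem_univ b)
    rw [Fin.append_right]
    unfold word
    rw [if_neg (Finset.mem_compl.mp hmem), ← image_natAdd_eq_compl]
    have hrk := rk_image hhmono b
    rw [hrk, ext0_lt w b.isLt]

lemma card_of_mem_pc {p q : ℕ} {S : Finset (Fin (p + q))}
    (hS : S ∈ Finset.powersetCard p (Finset.univ : Finset (Fin (p + q)))) : S.card = p :=
  (Finset.mem_powersetCard.mp hS).2

lemma card_compl_of_mem_pc {p q : ℕ} {S : Finset (Fin (p + q))}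
    (hS : S ∈ Finset.powersetCard p (Finset.univ : Finset (Fin (p + q)))) : Sᶜ.card = q := by
  rw [Finset.card_compl, Fintype.card_fin, card_of_mem_pc hS]
  omega

lemma shuffle_sum_eq {R : Type} [CommRing R] [Module R V] (p q : ℕ)
    (v : Fin p → V) (w : Fin q → V) :
    ∑ σ ∈ Finset.univ.filter (IsShuffle p q),
        (PiTensorProduct.tprod R) (fun k => Fin.append v w (σ⁻¹ k))
      = ∑ S ∈ Finset.powersetCard p (Finset.univ : Finset (Fin (p + q))),
          (PiTensorProduct.tprod R) (word (ext0 v) (ext0 w) S) := by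
  refine Finset.sum_bij'
    (fun σ _ => Finset.image (fun i : Fin p => σ (Fin.castAdd q i)) Finset.univ)
    (fun S hS => shufOf S (card_of_mem_pc hS) (card_compl_of_mem_pc hS)) ?_ ?_ ?_ ?_ ?_
  · intro σ hσ
    rw [Finset.mem_powersetCard]
    refine ⟨Finset.subset_univ _, ?_⟩
    rw [Finset.card_image_of_injective _
      (show Function.Injective (fun i : Fin p => σ (Fin.castAdd q i)) from
        fun a b hab => Fin.castAdd_injective _ _ (σ.injective hab)),
      Finset.card_univ, Fintype.card_fin]
  · intro S hS
    rw [Finset.mem_filter]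
    exact ⟨Finset.mem_univ _, isShuffle_shufOf _ _ _⟩
  · intro σ hσm
    have hσ : IsShuffle p q σ := (Finset.mem_filter.mp hσm).2
    have hgmono : StrictMono (fun i : Fin p => σ (Fin.castAdd q i)) :=
      fun i j hij => hσ.1 i j hij
    have hhmono : StrictMono (fun j : Fin q => σ (Fin.natAdd p j)) :=
      fun i j hij => hσ.2 i j hij
    apply Equiv.ext
    intro k
    induction k using Fin.addCases with
    | left a =>
      simp only [shufOf_castAdd]
      exact (congrFun (Finset.orderEmbOfFin_unique _
        (fun x => Finset.mem_image_of_mem _ (Finset.mem_univ x)) hgmono) a).symm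
    | right b =>
      simp only [shufOf_natAdd]
      refine (congrFun (Finset.orderEmbOfFin_unique _
        (fun x => ?_) hhmono) b).symm
      rw [← image_natAdd_eq_compl]
      exact Finset.mem_image_of_mem _ (Finset.mem_univ x)
  · intro S hS
    simp only [shufOf_castAdd]
    exact image_orderEmbOfFin S (card_of_mem_pc hS)
  · intro σ hσm
    have hσ : IsShuffle p q σ := (Finset.mem_filter.mp hσm).2
    exact congrArg (PiTensorProduct.tprod R) (funext (append_eq_word hσ v w))

end shuffles

section counting

/-- number of elements of `S` below `m`. -/
def cutIdx {n : ℕ} (S : Finset (Fin n)) (m : ℕ) : ℕ :=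
  (S.filter (fun k : Fin n => (k : ℕ) < m)).card

lemma cutIdx_le_card {n : ℕ} (S : Finset (Fin n)) (m : ℕ) : cutIdx S m ≤ S.card :=
  Finset.card_le_card (Finset.filter_subset _ _)

lemma card_low {n m : ℕ} (h : m ≤ n) :
    (Finset.univ.filter (fun k : Fin n => (k : ℕ) < m)).card = m := by
  have : Finset.univ.filter (fun k : Fin n => (k : ℕ) < m)
      = Finset.map (Fin.castLEOrderEmb h).toEmbedding Finset.univ := by
    ext k
    simp only [Finset.mem_filter, Finset.mem_univ, true_and, Finset.mem_map,
      RelEmbedding.coe_toEmbedding, Fin.castLEOrderEmb_apply]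
    constructor
    · intro hk; exact ⟨⟨(k : ℕ), hk⟩, rfl⟩
    · rintro ⟨a, rfl⟩; exact a.isLt
  rw [this, Finset.card_map, Finset.card_univ, Fintype.card_fin]

lemma cutIdx_add_compl {n : ℕ} (S : Finset (Fin n)) {m : ℕ} (h : m ≤ n) :
    cutIdx S m + cutIdx Sᶜ m = m := by
  classical
  have key := Finset.card_filter_add_card_filter_not
    (s := Finset.univ.filter (fun k : Fin n => (k : ℕ) < m)) (p := (· ∈ S))
  have h1 : (Finset.univ.filter (fun k : Fin n => (k : ℕ) < m)).filter (· ∈ S)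
      = S.filter (fun k : Fin n => (k : ℕ) < m) := by
    ext k; simp [and_comm]
  have h2 : (Finset.univ.filter (fun k : Fin n => (k : ℕ) < m)).filter (fun k => ¬ k ∈ S)
      = Sᶜ.filter (fun k : Fin n => (k : ℕ) < m) := by
    ext k; simp [and_comm]
  rw [h1, h2, card_low h] at key
  exact key

lemma cutIdx_le {n : ℕ} (S : Finset (Fin n)) {m : ℕ} (h : m ≤ n) : cutIdx S m ≤ m := by
  have := cutIdx_add_compl S h
  omega

/-- positions of `S` below `m1`, as a subset of `Fin m1`. -/
def lowPart {n : ℕ} (S : Finset (Fin n)) (m1 : ℕ) : Finset (Fin m1) :=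
  Finset.univ.filter (fun a : Fin m1 => ∃ k : Fin n, (k : ℕ) = (a : ℕ) ∧ k ∈ S)

/-- positions of `S` at or above `m`, shifted down by `m`, as a subset of `Fin m2`. -/
def highPart {n : ℕ} (S : Finset (Fin n)) (m m2 : ℕ) : Finset (Fin m2) :=
  Finset.univ.filter (fun b : Fin m2 => ∃ k : Fin n, (k : ℕ) = m + (b : ℕ) ∧ k ∈ S)

lemma mem_lowPart {n m1 : ℕ} {S : Finset (Fin n)} (h : m1 ≤ n) {a : Fin m1} :
    a ∈ lowPart S m1 ↔ (⟨(a : ℕ), lt_of_lt_of_le a.isLt h⟩ : Fin n) ∈ S := by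
  simp only [lowPart, Finset.mem_filter, Finset.mem_univ, true_and]
  constructor
  · rintro ⟨k, hk, hmem⟩
    rwa [show (⟨(a : ℕ), _⟩ : Fin n) = k from Fin.ext hk.symm]
  · intro hmem; exact ⟨_, rfl, hmem⟩

lemma mem_highPart {n m m2 : ℕ} {S : Finset (Fin n)} (h : m + m2 ≤ n) {b : Fin m2} :
    b ∈ highPart S m m2 ↔ (⟨m + (b : ℕ), by omega⟩ : Fin n) ∈ S := by
  simp only [highPart, Finset.mem_filter, Finset.mem_univ, true_and]
  constructor
  · rintro ⟨k, hk, hmem⟩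
    rwa [show (⟨m + (b : ℕ), _⟩ : Fin n) = k from Fin.ext hk.symm]
  · intro hmem; exact ⟨_, rfl, hmem⟩

lemma map_lowPart {n m1 : ℕ} (S : Finset (Fin n)) (h : m1 ≤ n) :
    (lowPart S m1).map (Fin.castLEOrderEmb h).toEmbedding
      = S.filter (fun k : Fin n => (k : ℕ) < m1) := by
  ext k
  simp only [Finset.mem_map, RelEmbedding.coe_toEmbedding, Fin.castLEOrderEmb_apply,
    Finset.mem_filter]
  constructor
  · rintro ⟨a, ha, rfl⟩
    rw [mem_lowPart h] at ha
    refine ⟨by rwa [show (Fin.castLE h a) = (⟨(a : ℕ), _⟩ : Fin n) from Fin.ext rfl], a.isLt⟩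
  · rintro ⟨hk, hlt⟩
    refine ⟨⟨(k : ℕ), hlt⟩, ?_, Fin.ext rfl⟩
    rw [mem_lowPart h]
    rwa [show (⟨(k : ℕ), _⟩ : Fin n) = k from Fin.ext rfl]

lemma card_lowPart {n m1 : ℕ} (S : Finset (Fin n)) (h : m1 ≤ n) :
    (lowPart S m1).card = cutIdx S m1 := by
  rw [← Finset.card_map (f := (Fin.castLEOrderEmb h).toEmbedding), map_lowPart S h]
  rfl

lemma map_highPart {n m m2 : ℕ} (S : Finset (Fin n)) (h : m + m2 = n) :
    (highPart S m m2).map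
        ((Fin.natAddOrderEmb m).toEmbedding.trans (finCongr h).toEmbedding)
      = S.filter (fun k : Fin n => ¬ (k : ℕ) < m) := by
  ext k
  simp only [Finset.mem_map, Function.Embedding.trans_apply, RelEmbedding.coe_toEmbedding,
    Fin.natAddOrderEmb_apply, Equiv.coe_toEmbedding, finCongr_apply, Finset.mem_filter]
  constructor
  · rintro ⟨b, hb, rfl⟩
    rw [mem_highPart (le_of_eq h)] at hb
    constructor
    · rwa [show (Fin.cast h (Fin.natAdd m b)) = (⟨m + (b : ℕ), by omega⟩ : Fin n) from
        Fin.ext rfl]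
    · simp only [Fin.coe_cast, Fin.coe_natAdd]; omega
  · rintro ⟨hk, hge⟩
    have hkv : (k : ℕ) < n := k.isLt
    refine ⟨⟨(k : ℕ) - m, by omega⟩, ?_, Fin.ext (by simp only [Fin.coe_cast, Fin.coe_natAdd]; omega)⟩
    rw [mem_highPart (le_of_eq h)]
    rwa [show (⟨m + ((k : ℕ) - m), _⟩ : Fin n) = k from
      Fin.ext (show m + ((k : ℕ) - m) = (k : ℕ) by omega)]

lemma card_highPart {n m m2 : ℕ} (S : Finset (Fin n)) (h : m + m2 = n) :
    (highPart S m m2).card = S.card - cutIdx S m := by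
  have key := Finset.card_filter_add_card_filter_not
    (s := S) (p := fun k : Fin n => (k : ℕ) < m)
  rw [← Finset.card_map (f := (Fin.natAddOrderEmb m).toEmbedding.trans (finCongr h).toEmbedding),
    map_highPart S h]
  unfold cutIdx at key ⊢
  omega

lemma filter_join_lt_left {mA mB : ℕ} (A : Finset (Fin mA)) (B : Finset (Fin mB)) :
    (join A B).filter (fun k : Fin (mA + mB) => (k : ℕ) < mA)
      = A.map (Fin.castAddOrderEmb mB).toEmbedding := by
  ext k
  simp only [join, Finset.mem_filter, Finset.mem_union, Finset.mem_map,
    RelEmbedding.coe_toEmbedding, Fin.castAddOrderEmb_apply, Fin.natAddOrderEmb_apply]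
  constructor
  · rintro ⟨⟨x, hx, rfl⟩ | ⟨x, hx, rfl⟩, hlt⟩
    · exact ⟨x, hx, rfl⟩
    · exfalso; simp only [Fin.coe_natAdd] at hlt; omega
  · rintro ⟨x, hx, rfl⟩
    exact ⟨Or.inl ⟨x, hx, rfl⟩, by simp only [Fin.coe_castAdd]; exact x.isLt⟩

lemma cutIdx_map_join {mA mB n : ℕ} (A : Finset (Fin mA)) (B : Finset (Fin mB))
    (e : mA + mB = n) :
    cutIdx ((join A B).map (finCongr e).toEmbedding) mA = A.card := by
  unfold cutIdx
  rw [Finset.filter_map, Finset.card_map]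
  simp only [Function.comp_def, Equiv.coe_toEmbedding, finCongr_apply, Fin.coe_cast]
  rw [filter_join_lt_left, Finset.card_map]

end counting




section mainpart

variable (R : Type) [CommRing R] [Module R V]

lemma tmOf_tprod_congr {a b : ℕ} (h : a = b) (f : Fin a → V) (g : Fin b → V)
    (hfg : ∀ k : Fin b, f (Fin.cast h.symm k) = g k) :
    tmOf R V a (PiTensorProduct.tprod R f) = tmOf R V b (PiTensorProduct.tprod R g) := by
  subst h
  exact congrArg _ (congrArg _ (funext fun k => (hfg k : f k = g k)))

/-- left-hand side term family. -/
noncomputable def Lterm {p q : ℕ} (v : Fin p → V) (w : Fin q → V)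
    (x : Finset (Fin (p + q)) × ℕ) : TensorModule R V ⊗[R] TensorModule R V :=
  tmOf R V x.2 (PiTensorProduct.tprod R
      (fun a : Fin x.2 => ext0 (word (ext0 v) (ext0 w) x.1) (a : ℕ)))
    ⊗ₜ[R] tmOf R V (p + q - x.2) (PiTensorProduct.tprod R
      (fun b : Fin (p + q - x.2) => ext0 (word (ext0 v) (ext0 w) x.1) (x.2 + (b : ℕ))))

/-- right-hand side term family. -/
noncomputable def Rterm {p q : ℕ} (v : Fin p → V) (w : Fin q → V)
    (r : (ij : ℕ × ℕ) × (Finset (Fin (ij.1 + ij.2)) × Finset (Fin ((p - ij.1) + (q - ij.2))))) :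
    TensorModule R V ⊗[R] TensorModule R V :=
  tmOf R V (r.1.1 + r.1.2) (PiTensorProduct.tprod R (word (ext0 v) (ext0 w) r.2.1))
    ⊗ₜ[R] tmOf R V ((p - r.1.1) + (q - r.1.2))
      (PiTensorProduct.tprod R
        (word (fun k => ext0 v (r.1.1 + k)) (fun k => ext0 w (r.1.2 + k)) r.2.2))

def LSet (p q : ℕ) : Finset (Finset (Fin (p + q)) × ℕ) :=
  (Finset.powersetCard p Finset.univ) ×ˢ (Finset.range (p + q + 1))

def RSet (p q : ℕ) :
    Finset ((ij : ℕ × ℕ) ×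
      (Finset (Fin (ij.1 + ij.2)) × Finset (Fin ((p - ij.1) + (q - ij.2))))) :=
  ((Finset.range (p + 1)) ×ˢ (Finset.range (q + 1))).sigma
    (fun ij => (Finset.powersetCard ij.1 Finset.univ) ×ˢ
      (Finset.powersetCard (p - ij.1) Finset.univ))

lemma mem_LSet {p q : ℕ} {x : Finset (Fin (p + q)) × ℕ} :
    x ∈ LSet p q ↔ x.1.card = p ∧ x.2 ≤ p + q := by
  unfold LSet
  rw [Finset.mem_product, Finset.mem_powersetCard_univ, Finset.mem_range]
  omega

lemma mem_RSet {p q : ℕ}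
    {r : (ij : ℕ × ℕ) × (Finset (Fin (ij.1 + ij.2)) × Finset (Fin ((p - ij.1) + (q - ij.2))))} :
    r ∈ RSet p q ↔ r.1.1 ≤ p ∧ r.1.2 ≤ q ∧ r.2.1.card = r.1.1 ∧ r.2.2.card = p - r.1.1 := by
  unfold RSet
  rw [Finset.mem_sigma, Finset.mem_product, Finset.mem_product,
    Finset.mem_powersetCard_univ, Finset.mem_powersetCard_univ,
    Finset.mem_range, Finset.mem_range]
  omega

lemma card_eq_of_map_join_eq {mA1 mB1 mA2 mB2 n : ℕ} (e1 : mA1 + mB1 = n)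
    (e2 : mA2 + mB2 = n) {A1 : Finset (Fin mA1)} {B1 : Finset (Fin mB1)}
    {A2 : Finset (Fin mA2)} {B2 : Finset (Fin mB2)} (hm : mA1 = mA2)
    (hS : (join A1 B1).map (finCongr e1).toEmbedding
      = (join A2 B2).map (finCongr e2).toEmbedding) :
    A1.card = A2.card := by
  rw [← cutIdx_map_join A1 B1 e1, ← cutIdx_map_join A2 B2 e2, hS, hm]

lemma sum_bij_main {p q : ℕ} (v : Fin p → V) (w : Fin q → V) :
    ∑ r ∈ RSet p q, Rterm R v w r = ∑ x ∈ LSet p q, Lterm R v w x := by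
  refine Finset.sum_bij
    (fun r hr =>
      ((join r.2.1 r.2.2).map
          (finCongr (show r.1.1 + r.1.2 + ((p - r.1.1) + (q - r.1.2)) = p + q by
            obtain ⟨h1, h2, h3, h4⟩ := mem_RSet.mp hr; omega)).toEmbedding,
        r.1.1 + r.1.2))
    ?_ ?_ ?_ ?_
  · -- membership
    intro r hr
    obtain ⟨h1, h2, h3, h4⟩ := mem_RSet.mp hr
    rw [mem_LSet]
    dsimp only
    constructor
    · rw [Finset.card_map, card_join, h3, h4]; omega
    · omega
  · -- injectivity
    intro r1 hr1 r2 hr2 heq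
    obtain ⟨h11, h12, h13, h14⟩ := mem_RSet.mp hr1
    obtain ⟨h21, h22, h23, h24⟩ := mem_RSet.mp hr2
    obtain ⟨⟨i1, j1⟩, A1, B1⟩ := r1
    obtain ⟨⟨i2, j2⟩, A2, B2⟩ := r2
    dsimp only at h11 h12 h13 h14 h21 h22 h23 h24 heq
    simp only [Prod.mk.injEq] at heq
    obtain ⟨hS, hm⟩ := heq
    have hcards : A1.card = A2.card := card_eq_of_map_join_eq _ _ hm hS
    have hii : i1 = i2 := by omega
    subst hii
    have hjj : j1 = j2 := by omega
    subst hjj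
    have hj : join A1 B1 = join A2 B2 := Finset.map_injective _ hS
    have hA : A1 = A2 := by
      ext a
      rw [← castAdd_mem_join (B := B1), hj, castAdd_mem_join]
    have hB : B1 = B2 := by
      ext b
      rw [← natAdd_mem_join (A := A1), hj, natAdd_mem_join]
    rw [hA, hB]
  · -- surjectivity
    intro x hx
    obtain ⟨S, m⟩ := x
    obtain ⟨hScard, hmle⟩ := mem_LSet.mp hx
    dsimp only at hScard hmle
    have hc_le_m : cutIdx S m ≤ m := cutIdx_le S hmle
    have hc_le_p : cutIdx S m ≤ p := by have := cutIdx_le_card S m; omega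
    have hcompl : cutIdx S m + cutIdx Sᶜ m = m := cutIdx_add_compl S hmle
    have hcomplcard : Sᶜ.card = q := by
      rw [Finset.card_compl, Fintype.card_fin, hScard]; omega
    have hmc_le_q : m - cutIdx S m ≤ q := by
      have := cutIdx_le_card Sᶜ m
      omega
    refine ⟨⟨(cutIdx S m, m - cutIdx S m),
      (lowPart S (cutIdx S m + (m - cutIdx S m)),
        highPart S m ((p - cutIdx S m) + (q - (m - cutIdx S m))))⟩, ?_, ?_⟩
    · rw [mem_RSet]
      refine ⟨hc_le_p, hmc_le_q, ?_, ?_⟩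
      · dsimp only
        rw [card_lowPart S (by omega)]
        exact congrArg (cutIdx S) (by omega : cutIdx S m + (m - cutIdx S m) = m)
      · dsimp only
        rw [card_highPart S (by omega), hScard]
    · refine Prod.ext ?_ (by dsimp only; omega)
      dsimp only
      ext k
      obtain ⟨k', rfl⟩ := (finCongr (show cutIdx S m + (m - cutIdx S m)
          + ((p - cutIdx S m) + (q - (m - cutIdx S m))) = p + q by omega)).surjective k
      rw [mem_map_finCongr]
      induction k' using Fin.addCases with
      | left a =>
        rw [castAdd_mem_join, mem_lowPart (show cutIdx S m + (m - cutIdx S m) ≤ p + q by omega)]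
        rw [show (finCongr _ (Fin.castAdd _ a) : Fin (p + q)) = ⟨(a : ℕ), by omega⟩ from
          Fin.ext rfl]
      | right b =>
        rw [natAdd_mem_join,
          mem_highPart (show m + ((p - cutIdx S m) + (q - (m - cutIdx S m))) ≤ p + q by omega)]
        rw [show (finCongr _ (Fin.natAdd _ b) : Fin (p + q))
            = ⟨m + (b : ℕ), by omega⟩ from Fin.ext (by
          simp only [finCongr_apply, Fin.coe_cast, Fin.coe_natAdd]; omega)]
  · -- term equality
    intro r hr
    obtain ⟨h1, h2, h3, h4⟩ := mem_RSet.mp hr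
    obtain ⟨⟨i, j⟩, A, B⟩ := r
    dsimp only at h1 h2 h3 h4
    have e : i + j + ((p - i) + (q - j)) = p + q := by omega
    have hAc : Aᶜ.card = j := by
      rw [Finset.card_compl, Fintype.card_fin, h3]; omega
    unfold Rterm Lterm
    dsimp only
    congr 1
    · -- first factors
      refine (congrArg _ (congrArg _ (funext fun a => ?_))).symm
      have hlt : (a : ℕ) < p + q := by omega
      rw [ext0_lt _ hlt,
        show (⟨(a : ℕ), hlt⟩ : Fin (p + q)) = finCongr e (Fin.castAdd _ a) from Fin.ext rfl,
        word_map_finCongr, word_join_castAdd]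
    · -- second factors
      refine (tmOf_tprod_congr R (show p + q - (i + j) = (p - i) + (q - j) by omega) _ _
        (fun k => ?_)).symm
      have hlt : (i + j) + ((Fin.cast (show ((p - i) + (q - j)) = p + q - (i + j) by omega) k : Fin (p + q - (i + j))) : ℕ) < p + q := by
        have := k.isLt
        simp only [Fin.coe_cast]
        omega
      rw [ext0_lt _ hlt]
      rw [show (⟨(i + j) + ((Fin.cast _ k : Fin (p + q - (i + j))) : ℕ), hlt⟩ : Fin (p + q))
          = finCongr e (Fin.natAdd (i + j) k) from Fin.ext (by
        simp only [finCongr_apply, Fin.coe_cast, Fin.coe_natAdd])]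
      rw [word_map_finCongr, word_join_natAdd, h3, hAc]

lemma main_generators
    (mul : TensorModule R V →ₗ[R] TensorModule R V →ₗ[R] TensorModule R V)
    (hmul : ∀ (p q : ℕ) (v : Fin p → V) (w : Fin q → V),
      mul (tmOf R V p (PiTensorProduct.tprod R v))
          (tmOf R V q (PiTensorProduct.tprod R w)) =
        tmOf R V (p + q)
          (∑ σ ∈ Finset.univ.filter (IsShuffle p q),
            PiTensorProduct.tprod R (fun k => Fin.append v w (σ⁻¹ k))))
    (Δ : TensorModule R V →ₗ[R] TensorModule R V ⊗[R] TensorModule R V)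
    (hΔ : ∀ (n : ℕ) (v : ℕ → V),
      Δ (tmOf R V n (PiTensorProduct.tprod R (fun i : Fin n => v i.val))) =
        ∑ i ∈ Finset.range (n + 1),
          (tmOf R V i (PiTensorProduct.tprod R (fun j : Fin i => v j.val))) ⊗ₜ[R]
            (tmOf R V (n - i) (PiTensorProduct.tprod R (fun j : Fin (n - i) => v (i + j.val)))))
    (mul2 : TensorModule R V ⊗[R] TensorModule R V →ₗ[R]
      TensorModule R V ⊗[R] TensorModule R V →ₗ[R] TensorModule R V ⊗[R] TensorModule R V)
    (hmul2 : ∀ x y x' y' : TensorModule R V,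
      mul2 (x ⊗ₜ[R] y) (x' ⊗ₜ[R] y') = (mul x x') ⊗ₜ[R] (mul y y'))
    (p q : ℕ) (v : Fin p → V) (w : Fin q → V) :
    Δ (mul (tmOf R V p (PiTensorProduct.tprod R v)) (tmOf R V q (PiTensorProduct.tprod R w)))
      = mul2 (Δ (tmOf R V p (PiTensorProduct.tprod R v)))
          (Δ (tmOf R V q (PiTensorProduct.tprod R w))) := by
  -- LHS
  have hword : ∀ S : Finset (Fin (p + q)),
      (fun k : Fin (p + q) => ext0 (word (ext0 v) (ext0 w) S) (k : ℕ))
        = word (ext0 v) (ext0 w) S := by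
    intro S; funext k; exact ext0_lt _ k.isLt
  have lhs_eq : Δ (mul (tmOf R V p (PiTensorProduct.tprod R v))
      (tmOf R V q (PiTensorProduct.tprod R w))) = ∑ x ∈ LSet p q, Lterm R v w x := by
    rw [hmul p q v w, shuffle_sum_eq (R := R) p q v w, map_sum, map_sum]
    unfold LSet
    rw [Finset.sum_product]
    refine Finset.sum_congr rfl fun S hS => ?_
    have h := hΔ (p + q) (ext0 (word (ext0 v) (ext0 w) S))
    rw [hword S] at h
    rw [h]
    rfl
  -- RHS
  have hΔx : Δ (tmOf R V p (PiTensorProduct.tprod R v))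
      = ∑ i ∈ Finset.range (p + 1),
          (tmOf R V i (PiTensorProduct.tprod R (fun a : Fin i => ext0 v (a : ℕ)))) ⊗ₜ[R]
            (tmOf R V (p - i) (PiTensorProduct.tprod R
              (fun a : Fin (p - i) => ext0 v (i + (a : ℕ))))) := by
    have h := hΔ p (ext0 v)
    rw [show (fun a : Fin p => ext0 v (a : ℕ)) = v from funext fun a => ext0_lt v a.isLt] at h
    exact h
  have hΔy : Δ (tmOf R V q (PiTensorProduct.tprod R w))
      = ∑ j ∈ Finset.range (q + 1),
          (tmOf R V j (PiTensorProduct.tprod R (fun b : Fin j => ext0 w (b : ℕ)))) ⊗ₜ[R]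
            (tmOf R V (q - j) (PiTensorProduct.tprod R
              (fun b : Fin (q - j) => ext0 w (j + (b : ℕ))))) := by
    have h := hΔ q (ext0 w)
    rw [show (fun b : Fin q => ext0 w (b : ℕ)) = w from funext fun b => ext0_lt w b.isLt] at h
    exact h
  have rhs_eq : mul2 (Δ (tmOf R V p (PiTensorProduct.tprod R v)))
      (Δ (tmOf R V q (PiTensorProduct.tprod R w))) = ∑ r ∈ RSet p q, Rterm R v w r := by
    rw [hΔx, hΔy, map_sum]
    rw [Finset.sum_congr rfl (fun j (_ : j ∈ Finset.range (q + 1)) => by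
      rw [map_sum, LinearMap.sum_apply])]
    rw [Finset.sum_comm]
    unfold RSet
    rw [Finset.sum_sigma, Finset.sum_product]
    refine Finset.sum_congr rfl fun i hi => Finset.sum_congr rfl fun j hj => ?_
    have hi' : i ≤ p := by have := Finset.mem_range.mp hi; omega
    have hj' : j ≤ q := by have := Finset.mem_range.mp hj; omega
    rw [hmul2, hmul i j _ _, hmul (p - i) (q - j) _ _,
      shuffle_sum_eq (R := R) i j _ _, shuffle_sum_eq (R := R) (p - i) (q - j) _ _,
      map_sum, map_sum, TensorProduct.sum_tmul]
    rw [Finset.sum_product]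
    refine Finset.sum_congr rfl fun A hA => ?_
    rw [TensorProduct.tmul_sum]
    refine Finset.sum_congr rfl fun B hB => ?_
    unfold Rterm
    dsimp only
    have hwA : word (ext0 (fun a : Fin i => ext0 v (a : ℕ)))
        (ext0 (fun b : Fin j => ext0 w (b : ℕ))) A = word (ext0 v) (ext0 w) A := by
      refine word_congr A (fun k hk => ?_) (fun k hk => ?_)
      · rw [card_of_mem_pc hA] at hk
        rw [ext0_lt _ hk]
      · rw [card_compl_of_mem_pc hA] at hk
        rw [ext0_lt _ hk]
    have hwB : word (ext0 (fun a : Fin (p - i) => ext0 v (i + (a : ℕ))))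
        (ext0 (fun b : Fin (q - j) => ext0 w (j + (b : ℕ)))) B
          = word (fun k => ext0 v (i + k)) (fun k => ext0 w (j + k)) B := by
      refine word_congr B (fun k hk => ?_) (fun k hk => ?_)
      · rw [card_of_mem_pc hB] at hk
        rw [ext0_lt _ hk]
      · rw [card_compl_of_mem_pc hB] at hk
        rw [ext0_lt _ hk]
    rw [hwA, hwB]
  rw [lhs_eq, rhs_eq]
  exact (sum_bij_main R v w).symm

end mainpart

end ShuffleAux

/-- The deconcatenation coproduct `Δ(v₁⊗…⊗v_n) = Σ_{i=0}^{n} (v₁⊗…⊗v_i) ⊗ (v_{i+1}⊗…⊗v_n)`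
is a homomorphism of `R`-algebras from `(T(V), μ_sh)` to `(T(V), μ_sh) ⊗ (T(V), μ_sh)`
with its componentwise product `(x⊗y)·(x′⊗y′) = (x *_sh x′) ⊗ (y *_sh y′)`:
`Δ(x *_sh y) = Δ(x) · Δ(y)`.  Thus the shuffle product and the deconcatenation coproduct
make `T(V)` a bialgebra. -/
theorem deconcatenation_is_algebra_map_for_shuffle {R V : Type} [CommRing R]
    [AddCommGroup V] [Module R V]
    (mul : TensorModule R V →ₗ[R] TensorModule R V →ₗ[R] TensorModule R V)
    (hmul : ∀ (p q : ℕ) (v : Fin p → V) (w : Fin q → V),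
      mul (tmOf R V p (PiTensorProduct.tprod R v))
          (tmOf R V q (PiTensorProduct.tprod R w)) =
        tmOf R V (p + q)
          (∑ σ ∈ Finset.univ.filter (IsShuffle p q),
            PiTensorProduct.tprod R (fun k => Fin.append v w (σ⁻¹ k))))
    (Δ : TensorModule R V →ₗ[R] TensorModule R V ⊗[R] TensorModule R V)
    (hΔ : ∀ (n : ℕ) (v : ℕ → V),
      Δ (tmOf R V n (PiTensorProduct.tprod R (fun i : Fin n => v i.val))) =
        ∑ i ∈ Finset.range (n + 1),
          (tmOf R V i (PiTensorProduct.tprod R (fun j : Fin i => v j.val))) ⊗ₜ[R]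
            (tmOf R V (n - i) (PiTensorProduct.tprod R (fun j : Fin (n - i) => v (i + j.val)))))
    (mul2 : TensorModule R V ⊗[R] TensorModule R V →ₗ[R]
      TensorModule R V ⊗[R] TensorModule R V →ₗ[R] TensorModule R V ⊗[R] TensorModule R V)
    (hmul2 : ∀ x y x' y' : TensorModule R V,
      mul2 (x ⊗ₜ[R] y) (x' ⊗ₜ[R] y') = (mul x x') ⊗ₜ[R] (mul y y')) :
    ∀ x y : TensorModule R V, Δ (mul x y) = mul2 (Δ x) (Δ y) := by
  classical
  intro x y
  set G : Set (TensorModule R V) :=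
    {z | ∃ (n : ℕ) (f : Fin n → V), z = tmOf R V n (PiTensorProduct.tprod R f)} with hG
  have hspan : ∀ z : TensorModule R V, z ∈ Submodule.span R G := by
    intro z
    induction z using DirectSum.induction_on with
    | zero => exact Submodule.zero_mem _
    | of i a =>
      refine PiTensorProduct.induction_on a ?_ ?_
      · intro r f
        rw [← DirectSum.lof_eq_of R, map_smul]
        exact Submodule.smul_mem _ r (Submodule.subset_span ⟨i, f, rfl⟩)
      · intro a b ha hb
        rw [← DirectSum.lof_eq_of R, map_add]
        rw [← DirectSum.lof_eq_of R] at ha hb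
        exact Submodule.add_mem _ ha hb
    | add a b ha hb => exact Submodule.add_mem _ ha hb
  refine Submodule.span_induction₂
    (p := fun x y _ _ => Δ (mul x y) = mul2 (Δ x) (Δ y)) ?_ ?_ ?_ ?_ ?_ ?_ ?_
    (hspan x) (hspan y)
  · rintro x y ⟨n1, f1, rfl⟩ ⟨n2, f2, rfl⟩
    exact ShuffleAux.main_generators R mul hmul Δ hΔ mul2 hmul2 n1 n2 f1 f2
  · intro y _
    simp only [map_zero, LinearMap.zero_apply]
  · intro x _
    simp only [map_zero]
  · intro x y z _ _ _ h1 h2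
    simp only [map_add, LinearMap.add_apply, h1, h2]
  · intro x y z _ _ _ h1 h2
    simp only [map_add, h1, h2]
  · intro r x y _ _ h
    simp only [map_smul, LinearMap.smul_apply, h]
  · intro r x y _ _ h
    simp only [map_smul, h]
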